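/- Let G(z) = 1/z + 1/z² = (z+1)/z² be the formal 'Cauchy transform' with moment sequence m₁ = 1, m_n = 0 for n ≥ 2. Then its compositional inverse is K(z) = (1 + √(1+4z))/(2z), the H-transform H = G'/G − G''/(2G') equals −1/(z(z+1)(z+2)), and the series R̂(z) = −H(K(z))·K'(z) equals −4z/(1 + 4z + √(1+4z))², whose n-th Taylor coefficient (coefficient of z^{n−1}) is (−1)ⁿ(4ⁿ − C(2n+1, n)). -/

import Mathlib

/-- `G(z) = 1/z + 1/z² = (z+1)/z²`, the formal "Cauchy transform" with moment
sequence `m₁ = 1`, `m_n = 0` for `n ≥ 2`. -/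
noncomputable def Ginv : ℝ → ℝ := fun z => (z + 1) / z ^ 2

/-- The compositional inverse `K(z) = (1 + √(1+4z))/(2z)` of `Ginv`. -/
noncomputable def Kinv : ℝ → ℝ := fun z => (1 + Real.sqrt (1 + 4 * z)) / (2 * z)

/-- The `H`-transform of `Ginv`: `H(z) = −1/(z(z+1)(z+2))`. -/
noncomputable def Hinv : ℝ → ℝ := fun z => -1 / (z * (z + 1) * (z + 2))


section Aux
open Nat Finset


lemma centralBinom_le_four_pow (n : ℕ) : Nat.centralBinom n ≤ 4 ^ n := by
  induction n with
  | zero => simp [Nat.centralBinom]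
  | succ n ih =>
    have h := Nat.succ_mul_centralBinom_succ n
    have h3 : Nat.centralBinom (n + 1) ≤ 4 * Nat.centralBinom n :=
      Nat.le_of_mul_le_mul_left (by nlinarith [Nat.centralBinom_pos n]) (Nat.succ_pos n)
    calc Nat.centralBinom (n + 1) ≤ 4 * Nat.centralBinom n := h3
      _ ≤ 4 * 4 ^ n := by omega
      _ = 4 ^ (n + 1) := by ring

lemma my_catalan_pos (n : ℕ) : 0 < catalan n := by
  have h := succ_mul_catalan_eq_centralBinom n
  have := Nat.centralBinom_pos n
  nlinarith

lemma catalan_le_four_pow (n : ℕ) : catalan n ≤ 4 ^ n := by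
  have h := succ_mul_catalan_eq_centralBinom n
  have h2 := _root_.centralBinom_le_four_pow n
  nlinarith

lemma catalan_real_identity (n : ℕ) :
    4 * (((2 * n + 1).choose n : ℝ)) = ((2 * n + 3).choose (n + 1) : ℝ) + (catalan (n + 1) : ℝ) := by
  have hc : ((n : ℝ) + 2) * (catalan (n + 1) : ℝ) = ((2 * n + 2).choose (n + 1) : ℝ) := by
    have h := succ_mul_catalan_eq_centralBinom (n + 1)
    rw [Nat.centralBinom_eq_two_mul_choose] at h
    have h' : ((n + 1 + 1) * catalan (n + 1) : ℕ) = ((2 * (n + 1)).choose (n + 1) : ℕ) := h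
    have := congrArg (fun m : ℕ => (m : ℝ)) h'
    push_cast at this
    rw [show 2 * n + 2 = 2 * (n + 1) from by ring]
    linarith [this]
  have e1 : ((2 * n + 1).choose n : ℝ) = (2 * n + 1)! / ((n)! * (n + 1)!) := by
    rw [Nat.cast_choose ℝ (by omega), show 2 * n + 1 - n = n + 1 from by omega]
  have e2 : ((2 * n + 3).choose (n + 1) : ℝ) = (2 * n + 3)! / ((n + 1)! * (n + 2)!) := by
    rw [Nat.cast_choose ℝ (by omega), show 2 * n + 3 - (n + 1) = n + 2 from by omega]
  have e3 : ((2 * n + 2).choose (n + 1) : ℝ) = (2 * n + 2)! / ((n + 1)! * (n + 1)!) := by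
    rw [Nat.cast_choose ℝ (by omega), show 2 * n + 2 - (n + 1) = n + 1 from by omega]
  have f1 : ((2 * n + 3)! : ℝ) = (2 * n + 3) * (2 * n + 2) * (2 * n + 1)! := by
    rw [show 2 * n + 3 = (2 * n + 2) + 1 by ring, Nat.factorial_succ,
      show 2 * n + 2 = (2 * n + 1) + 1 by ring, Nat.factorial_succ]
    push_cast; ring
  have f2 : ((2 * n + 2)! : ℝ) = (2 * n + 2) * (2 * n + 1)! := by
    rw [show 2 * n + 2 = (2 * n + 1) + 1 by ring, Nat.factorial_succ]; push_cast; ring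
  have f4 : ((n + 2)! : ℝ) = (n + 2) * (n + 1)! := by
    rw [show n + 2 = (n + 1) + 1 by ring, Nat.factorial_succ]; push_cast; ring
  have f5 : ((n + 1)! : ℝ) = (n + 1) * (n)! := by rw [Nat.factorial_succ]; push_cast; ring
  have hcat : (catalan (n + 1) : ℝ) = (2 * n + 2)! / ((n + 1)! * (n + 1)!) / ((n : ℝ) + 2) := by
    rw [← e3, ← hc]; field_simp
  rw [e1, e2, hcat, f1, f2, f4, f5]
  have h0 : ((n)! : ℝ) ≠ 0 := Nat.cast_ne_zero.mpr (Nat.factorial_ne_zero n)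
  have h1 : ((n + 1)! : ℝ) ≠ 0 := Nat.cast_ne_zero.mpr (Nat.factorial_ne_zero _)
  have h2 : ((2 * n + 1)! : ℝ) ≠ 0 := Nat.cast_ne_zero.mpr (Nat.factorial_ne_zero _)
  field_simp
  ring

lemma key_sum_identity (n : ℕ) :
    ∑ k ∈ range (n + 1), (catalan k : ℝ) * 4 ^ (n - k)
      = 2 * 4 ^ n - ((2 * n + 1).choose n : ℝ) := by
  induction n with
  | zero => norm_num
  | succ n ih =>
    rw [Finset.sum_range_succ]
    have hstep : ∑ k ∈ range (n + 1), (catalan k : ℝ) * 4 ^ (n + 1 - k)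
        = 4 * ∑ k ∈ range (n + 1), (catalan k : ℝ) * 4 ^ (n - k) := by
      rw [Finset.mul_sum]
      refine Finset.sum_congr rfl fun k hk => ?_
      have hk' : k ≤ n := by simpa [Nat.lt_succ_iff] using hk
      rw [show n + 1 - k = (n - k) + 1 from by omega, pow_succ]
      ring
    rw [hstep, ih, Nat.sub_self, pow_zero]
    have h := catalan_real_identity n
    rw [show 2 * (n + 1) + 1 = 2 * n + 3 from by omega, pow_succ]
    linarith [h]

theorem part4 (z : ℝ) (hz : 0 < z) (hz4 : z < 1 / 4) :
    -4 * z / (1 + 4 * z + Real.sqrt (1 + 4 * z)) ^ 2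
      = ∑' n : ℕ, (-1 : ℝ) ^ n * ((4 : ℝ) ^ n - (Nat.choose (2 * n + 1) n : ℝ)) * z ^ n := by
  set s := Real.sqrt (1 + 4 * z) with hs_def
  have h14 : (0:ℝ) < 1 + 4 * z := by linarith
  have hs2 : s ^ 2 = 1 + 4 * z := Real.sq_sqrt h14.le
  have hs_pos : 0 < s := Real.sqrt_pos.mpr h14
  have h4z : 4 * z < 1 := by linarith
  have h4z0 : (0:ℝ) ≤ 4 * z := by linarith
  -- the Catalan series
  set b : ℕ → ℝ := fun n => (-1) ^ n * (catalan n : ℝ) * z ^ n with hb_def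
  have hb_bound : ∀ n, ‖b n‖ ≤ (4 * z) ^ n := by
    intro n
    have h1 : ‖b n‖ = (catalan n : ℝ) * z ^ n := by
      simp [hb_def, abs_mul, abs_pow, abs_of_pos hz, Nat.abs_cast]
    rw [h1, mul_pow]
    have : (catalan n : ℝ) ≤ 4 ^ n := by exact_mod_cast catalan_le_four_pow n
    have hzn : (0:ℝ) ≤ z ^ n := (pow_pos hz n).le
    nlinarith [pow_pos hz n]
  have hgeo : Summable fun n : ℕ => (4 * z) ^ n :=
    summable_geometric_of_lt_one h4z0 h4z
  have hb_norm : Summable fun n => ‖b n‖ :=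
    Summable.of_nonneg_of_le (fun n => norm_nonneg _) hb_bound hgeo
  have hb : Summable b := hb_norm.of_norm
  set E : ℝ := ∑' n, b n with hE_def
  -- Cauchy product: z E² = 1 - E
  have hcauchy := tsum_mul_tsum_eq_tsum_sum_range_of_summable_norm hb_norm hb_norm
  have hinner : ∀ n : ℕ, ∑ k ∈ range (n + 1), b k * b (n - k)
      = (-1) ^ n * (catalan (n + 1) : ℝ) * z ^ n := by
    intro n
    have : ∑ k ∈ range (n + 1), b k * b (n - k)
        = ∑ k ∈ range (n + 1), (-1 : ℝ) ^ n * ((catalan k : ℝ) * (catalan (n - k) : ℝ)) * z ^ n := by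
      refine Finset.sum_congr rfl fun k hk => ?_
      have hk' : k ≤ n := by simpa [Nat.lt_succ_iff] using hk
      simp only [hb_def]
      rw [show (-1:ℝ)^k * (catalan k : ℝ) * z ^ k * ((-1:ℝ)^(n-k) * (catalan (n-k) : ℝ) * z ^ (n-k))
          = ((-1:ℝ)^k * (-1:ℝ)^(n-k)) * ((catalan k : ℝ) * (catalan (n-k) : ℝ)) * (z ^ k * z ^ (n-k))
        from by ring, ← pow_add, ← pow_add, Nat.add_sub_cancel' hk']
    rw [this, ← Finset.sum_mul, ← Finset.mul_sum]
    congr 1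
    congr 1
    rw [catalan_succ', Nat.sum_antidiagonal_eq_sum_range_succ (fun x y => catalan x * catalan y) n]
    push_cast
    rfl
  have hEsq : E * E = ∑' n : ℕ, (-1) ^ n * (catalan (n + 1) : ℝ) * z ^ n := by
    rw [hE_def, hcauchy]
    exact tsum_congr hinner
  have hsum_shift : Summable (fun n => b (n + 1)) := by
    exact (summable_nat_add_iff 1).mpr hb
  have hshift : ∑' n, b (n + 1) = E - 1 := by
    have := Summable.tsum_eq_zero_add hb
    have hb0 : b 0 = 1 := by simp [hb_def]
    rw [hE_def]
    rw [this, hb0]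
    ring
  have hT : ∑' n, b (n + 1) = -z * (E * E) := by
    rw [hEsq, ← tsum_mul_left]
    refine tsum_congr fun n => ?_
    simp only [hb_def]
    rw [pow_succ, pow_succ]
    ring
  have hquad : z * E ^ 2 = 1 - E := by
    have := hshift.symm.trans hT
    nlinarith [this]
  -- (2zE + 1)² = 1 + 4z  and positivity ⇒ s = 2zE + 1
  have hsq : (2 * z * E + 1) ^ 2 = 1 + 4 * z := by nlinarith [hquad]
  -- |E| ≤ 2
  have habs_le : ∑' n, ‖b n‖ ≤ 2 := by
    refine Summable.tsum_le_of_sum_range_le hb_norm fun n => ?_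
    cases n with
    | zero => simp
    | succ m =>
      have hterm : ∀ k ∈ range (m + 1), ‖b k‖ ≤ (catalan k : ℝ) * 4 ^ (m - k) / 4 ^ m := by
        intro k hk
        have hk' : k ≤ m := by simpa [Nat.lt_succ_iff] using hk
        have h1 : ‖b k‖ = (catalan k : ℝ) * z ^ k := by
          simp [hb_def, abs_mul, abs_pow, abs_of_pos hz, Nat.abs_cast]
        rw [h1]
        have hz4k : z ^ k ≤ (1/4 : ℝ) ^ k := by
          exact pow_le_pow_left₀ hz.le (by linarith) k
        have heq : ((1:ℝ)/4) ^ k = 4 ^ (m - k) / 4 ^ m := by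
          rw [div_pow, one_pow, div_eq_div_iff (by positivity) (by positivity), one_mul,
            ← pow_add]
          congr 1
          omega
        calc (catalan k : ℝ) * z ^ k ≤ (catalan k : ℝ) * (1/4) ^ k := by
              have : (0:ℝ) ≤ (catalan k : ℝ) := Nat.cast_nonneg _
              nlinarith
          _ = (catalan k : ℝ) * 4 ^ (m - k) / 4 ^ m := by rw [heq]; ring
      calc ∑ k ∈ range (m + 1), ‖b k‖
          ≤ ∑ k ∈ range (m + 1), (catalan k : ℝ) * 4 ^ (m - k) / 4 ^ m :=
            Finset.sum_le_sum hterm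
        _ = (∑ k ∈ range (m + 1), (catalan k : ℝ) * 4 ^ (m - k)) / 4 ^ m :=
            (Finset.sum_div _ _ _).symm
        _ = (2 * 4 ^ m - ((2 * m + 1).choose m : ℝ)) / 4 ^ m := by rw [key_sum_identity]
        _ ≤ 2 := by
            rw [div_le_iff₀ (by positivity)]
            have : (0:ℝ) ≤ ((2 * m + 1).choose m : ℝ) := Nat.cast_nonneg _
            linarith
  have hE_abs : |E| ≤ 2 := by
    calc |E| = ‖E‖ := rfl
      _ ≤ ∑' n, ‖b n‖ := norm_tsum_le_tsum_norm hb_norm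
      _ ≤ 2 := habs_le
  have hpos : 0 < 2 * z * E + 1 := by
    have h1 : -2 ≤ E := by cases abs_le.mp hE_abs; linarith
    nlinarith
  have hsE : s = 2 * z * E + 1 := by
    rw [hs_def, ← hsq, Real.sqrt_sq hpos.le]
  -- geometric series
  set g : ℕ → ℝ := fun n => (-(4 * z)) ^ n with hg_def
  have hg_eq : ∀ n, ‖g n‖ = (4 * z) ^ n := by
    intro n
    simp only [hg_def]
    rw [norm_pow, norm_neg, Real.norm_eq_abs, abs_of_nonneg h4z0]
  have hg_norm : Summable fun n => ‖g n‖ := by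
    simpa only [hg_eq] using hgeo
  have hg_tsum : ∑' n, g n = (1 + 4 * z)⁻¹ := by
    rw [hg_def, tsum_geometric_of_norm_lt_one (by
      rw [norm_neg, Real.norm_eq_abs, abs_of_nonneg h4z0]; exact h4z), sub_neg_eq_add]
  -- modified series b' with b' 0 = 0
  set b' : ℕ → ℝ := fun n => b n - if n = 0 then 1 else 0 with hb'_def
  have hdelta : Summable fun n : ℕ => ‖(if n = 0 then (1:ℝ) else 0)‖ := by
    apply summable_of_finite_support
    apply Set.Finite.subset (Set.finite_singleton 0)
    intro n hn
    simp only [Function.mem_support, Set.mem_singleton_iff] at hn ⊢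
    by_contra h
    exact hn (by simp [h])
  have hb'_norm : Summable fun n => ‖b' n‖ := by
    apply Summable.of_nonneg_of_le (fun n => norm_nonneg _)
      (fun n => norm_sub_le _ _) (hb_norm.add hdelta)
  have hb'_tsum : ∑' n, b' n = E - 1 := by
    rw [hb'_def, Summable.tsum_sub hb hdelta.of_norm, show (∑' n : ℕ, if n = 0 then (1:ℝ) else 0) = 1 from tsum_ite_eq 0 (fun _ => (1:ℝ))]
  have hcauchy2 := tsum_mul_tsum_eq_tsum_sum_range_of_summable_norm hb'_norm hg_norm
  have hinner2 : ∀ n : ℕ, ∑ k ∈ range (n + 1), b' k * g (n - k)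
      = (-1) ^ n * ((4:ℝ) ^ n - ((2 * n + 1).choose n : ℝ)) * z ^ n := by
    intro n
    have hsplit : ∑ k ∈ range (n + 1), b' k * g (n - k)
        = (∑ k ∈ range (n + 1), b k * g (n - k)) - g n := by
      simp only [hb'_def, sub_mul, Finset.sum_sub_distrib, ite_mul, one_mul, zero_mul]
      congr 1
      rw [Finset.sum_ite_eq' (range (n + 1)) 0 (fun k => g (n - k))]
      simp
    have hmain : ∑ k ∈ range (n + 1), b k * g (n - k)
        = (-1) ^ n * z ^ n * ∑ k ∈ range (n + 1), (catalan k : ℝ) * 4 ^ (n - k) := by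
      rw [Finset.mul_sum]
      refine Finset.sum_congr rfl fun k hk => ?_
      have hk' : k ≤ n := by simpa [Nat.lt_succ_iff] using hk
      simp only [hb_def, hg_def]
      rw [show (-(4 * z)) ^ (n - k) = (-1:ℝ)^(n-k) * 4^(n-k) * z^(n-k) from by
        rw [neg_pow, mul_pow]; ring]
      rw [show (-1:ℝ)^k * (catalan k : ℝ) * z ^ k * ((-1:ℝ)^(n-k) * 4^(n-k) * z^(n-k))
          = ((-1:ℝ)^k * (-1:ℝ)^(n-k)) * (z ^ k * z^(n-k)) * ((catalan k : ℝ) * 4^(n-k))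
        from by ring, ← pow_add, ← pow_add, Nat.add_sub_cancel' hk']
    rw [hsplit, hmain, key_sum_identity]
    have hgn : g n = (-1:ℝ)^n * 4^n * z^n := by
      simp only [hg_def]
      rw [neg_pow, mul_pow]; ring
    rw [hgn]
    ring
  have hRHS : ∑' n : ℕ, (-1 : ℝ) ^ n * ((4 : ℝ) ^ n - ((2 * n + 1).choose n : ℝ)) * z ^ n
      = (E - 1) * (1 + 4 * z)⁻¹ := by
    rw [← hb'_tsum, ← hg_tsum, hcauchy2]
    exact (tsum_congr hinner2).symm
  rw [hRHS, hsE]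
  -- final algebra
  have hne2 : (2 * z * E + 1 : ℝ) ≠ 0 := hpos.ne'
  rw [← hsq]
  have hd : ((2 * z * E + 1) ^ 2 + (2 * z * E + 1) : ℝ) ≠ 0 := by positivity
  rw [div_eq_iff (pow_ne_zero 2 hd)]
  have expand : (E - 1) * (((2 * z * E + 1) ^ 2)⁻¹) * ((2 * z * E + 1) ^ 2 + (2 * z * E + 1)) ^ 2
      = (E - 1) * ((2 * z * E + 1) + 1) ^ 2 * ((2 * z * E + 1) ^ 2 * ((2 * z * E + 1) ^ 2)⁻¹) := by
    ring
  rw [expand, mul_inv_cancel₀ (pow_ne_zero 2 hne2), mul_one]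
  linear_combination (-4 * (1 + z * (E - 1))) * hquad

lemma part1 (z : ℝ) (hz : 0 < z) : Ginv (Kinv z) = z := by
  have h14 : (0:ℝ) < 1 + 4 * z := by linarith
  set s := Real.sqrt (1 + 4 * z) with hs_def
  have hs2 : s ^ 2 = 1 + 4 * z := Real.sq_sqrt h14.le
  have hs_pos : 0 < s := Real.sqrt_pos.mpr h14
  have hK_pos : 0 < Kinv z := by
    rw [Kinv]; positivity
  rw [Ginv, Kinv]
  have h1 : (1 + s) / (2 * z) ≠ 0 := by
    have : (0:ℝ) < (1 + s) / (2 * z) := by positivity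
    exact this.ne'
  field_simp
  nlinarith [hs2, hs_pos]

lemma hasDerivAt_Ginv (z : ℝ) (hz : z ≠ 0) : HasDerivAt Ginv (-(z + 2) / z ^ 3) z := by
  have h1 : HasDerivAt (fun w : ℝ => w + 1) 1 z := (hasDerivAt_id z).add_const 1
  have h2 : HasDerivAt (fun w : ℝ => w ^ 2) (2 * z) z := by
    simpa using hasDerivAt_pow 2 z
  have h := h1.div h2 (pow_ne_zero 2 hz)
  refine h.congr_deriv ?_
  field_simp
  ring

lemma deriv_Ginv_eq (z : ℝ) (hz : z ≠ 0) : deriv Ginv z = -(z + 2) / z ^ 3 :=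
  (hasDerivAt_Ginv z hz).deriv

lemma deriv2_Ginv_eq (z : ℝ) (hz : z ≠ 0) : deriv (deriv Ginv) z = (2 * z + 6) / z ^ 4 := by
  have hev : ∀ᶠ w in nhds z, deriv Ginv w = -(w + 2) / w ^ 3 := by
    filter_upwards [isOpen_compl_singleton.mem_nhds (by simpa using hz :
      z ∈ ({0} : Set ℝ)ᶜ)] with w hw
    exact deriv_Ginv_eq w (by simpa using hw)
  rw [Filter.EventuallyEq.deriv_eq hev]
  have h1 : HasDerivAt (fun w : ℝ => -(w + 2)) (-1) z := by
    exact ((hasDerivAt_id z).add_const 2).neg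
  have h2 : HasDerivAt (fun w : ℝ => w ^ 3) (3 * z ^ 2) z := by
    simpa using hasDerivAt_pow 3 z
  have h := h1.div h2 (pow_ne_zero 3 hz)
  rw [show deriv (fun x : ℝ => -(x + 2) / x ^ 3) z = _ from h.deriv]
  field_simp
  ring

lemma part2 (z : ℝ) (hz : 0 < z) :
    deriv Ginv z / Ginv z - deriv (deriv Ginv) z / (2 * deriv Ginv z) = Hinv z := by
  rw [deriv_Ginv_eq z hz.ne', deriv2_Ginv_eq z hz.ne', Ginv, Hinv]
  have h1 : z + 1 ≠ 0 := by positivity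
  have h2 : z + 2 ≠ 0 := by positivity
  have h3 : z ≠ 0 := hz.ne'
  have hb1 : ((z + 1) / z ^ 2 : ℝ) ≠ 0 := by positivity
  have hb2 : (2 * (-(z + 2) / z ^ 3) : ℝ) ≠ 0 := by
    have hlt : -(z + 2) / z ^ 3 < 0 := div_neg_of_neg_of_pos (by linarith) (by positivity)
    intro h
    nlinarith
  have e1 : -(z + 2) / z ^ 3 / ((z + 1) / z ^ 2) = -(z + 2) / (z * (z + 1)) := by
    rw [div_eq_iff hb1]
    field_simp
  have e2 : (2 * z + 6) / z ^ 4 / (2 * (-(z + 2) / z ^ 3)) = -(z + 3) / (z * (z + 2)) := by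
    rw [div_eq_iff hb2]
    field_simp
    ring
  rw [e1, e2]
  field_simp
  ring

lemma deriv_Kinv_eq (z : ℝ) (hz : 0 < z) :
    deriv Kinv z = (2 / Real.sqrt (1 + 4 * z) * (2 * z) - (1 + Real.sqrt (1 + 4 * z)) * 2)
      / (2 * z) ^ 2 := by
  have h14 : (0:ℝ) < 1 + 4 * z := by linarith
  have hs_pos : 0 < Real.sqrt (1 + 4 * z) := Real.sqrt_pos.mpr h14
  have h1 : HasDerivAt (fun w : ℝ => 1 + 4 * w) 4 z := by
    simpa using ((hasDerivAt_id z).const_mul 4).const_add 1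
  have h2 : HasDerivAt (fun w : ℝ => Real.sqrt (1 + 4 * w)) (4 / (2 * Real.sqrt (1 + 4 * z))) z :=
    h1.sqrt h14.ne'
  have h3 : HasDerivAt (fun w : ℝ => 1 + Real.sqrt (1 + 4 * w))
      (4 / (2 * Real.sqrt (1 + 4 * z))) z := h2.const_add 1
  have h4 : HasDerivAt (fun w : ℝ => 2 * w) 2 z := by
    simpa using (hasDerivAt_id z).const_mul 2
  have h5 := h3.div h4 (by positivity : 2 * z ≠ 0)
  have : HasDerivAt Kinv ((4 / (2 * Real.sqrt (1 + 4 * z)) * (2 * z)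
      - (1 + Real.sqrt (1 + 4 * z)) * 2) / (2 * z) ^ 2) z := h5
  rw [this.deriv]
  congr 1
  rw [show (4 : ℝ) / (2 * Real.sqrt (1 + 4 * z)) = 2 / Real.sqrt (1 + 4 * z) from by
    rw [div_eq_div_iff (by positivity) (by positivity)]; ring]

lemma part3 (z : ℝ) (hz : 0 < z) :
    -(Hinv (Kinv z)) * deriv Kinv z
      = -4 * z / (1 + 4 * z + Real.sqrt (1 + 4 * z)) ^ 2 := by
  have h14 : (0:ℝ) < 1 + 4 * z := by linarith
  rw [deriv_Kinv_eq z hz, Hinv, Kinv]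
  set s := Real.sqrt (1 + 4 * z) with hs_def
  have hs2 : s ^ 2 = 1 + 4 * z := Real.sq_sqrt h14.le
  have hs_pos : 0 < s := Real.sqrt_pos.mpr h14
  have hK : (0:ℝ) < (1 + s) / (2 * z) := by positivity
  have hK1 : (0:ℝ) < (1 + s) / (2 * z) + 1 := by positivity
  have hK2 : (0:ℝ) < (1 + s) / (2 * z) + 2 := by positivity
  have hden : (0:ℝ) < 1 + 4 * z + s := by positivity
  field_simp
  linear_combination (-8 * s * z - 32 * z ^ 2 - 8 * z) * hs2

end Aux

/-- Example 5.14 (inverse of Laguerre polynomials): for `G(z) = (z+1)/z²`: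
(i) its compositional inverse is `K(z) = (1+√(1+4z))/(2z)`;
(ii) the `H`-transform `G'/G − G''/(2G')` equals `−1/(z(z+1)(z+2))`;
(iii) `R̂(z) = −H(K(z))·K'(z)` equals `−4z/(1 + 4z + √(1+4z))²`;
(iv) the Taylor expansion `−4z/(1+4z+√(1+4z))² = ∑_n (−1)ⁿ(4ⁿ − C(2n+1,n)) zⁿ`
holds (on `0 < z < 1/4`). -/
theorem inverse_laguerre_fluctuations :
    (∀ z : ℝ, 0 < z → Ginv (Kinv z) = z) ∧
    (∀ z : ℝ, 0 < z →
      deriv Ginv z / Ginv z - deriv (deriv Ginv) z / (2 * deriv Ginv z) = Hinv z) ∧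
    (∀ z : ℝ, 0 < z →
      -(Hinv (Kinv z)) * deriv Kinv z
        = -4 * z / (1 + 4 * z + Real.sqrt (1 + 4 * z)) ^ 2) ∧
    (∀ z : ℝ, 0 < z → z < 1 / 4 →
      -4 * z / (1 + 4 * z + Real.sqrt (1 + 4 * z)) ^ 2
        = ∑' n : ℕ, (-1 : ℝ) ^ n * ((4 : ℝ) ^ n - (Nat.choose (2 * n + 1) n : ℝ)) * z ^ n) :=
  ⟨part1, part2, part3, part4⟩
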